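/- arXiv:1711.10992 — 4 statements merged into one kernel-verified Lean document; each statement's English description precedes it below -/
import Mathlib

section
/- Let (x_k) be a periodic autoregressive (PAR) process of period p with coefficients (α_k), innovations of variance σ², deterministic initial condition x_0, and Floquet multiplier λ = ∏_{k=1}^{p} α_k. Then for every n ≥ 0, the variance of the return to the starting section after n + 1 full cycles satisfies Var(x_{p + np}) = Var(x_p) · Σ_{ℓ=0}^{n} (λ²)^{ℓ}. -/
open MeasureTheory ProbabilityTheory Filter Finset

lemma par_aux_variance_const_add {Ω : Type*} [MeasurableSpace Ω] (μ : Measure Ω)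
    [IsProbabilityMeasure μ] (c : ℝ) (Y : Ω → ℝ) (hY : MemLp Y 2 μ) :
    variance (fun ω => c + Y ω) μ = variance Y μ := by
  have h : MemLp (fun ω => c + Y ω) 2 μ := (memLp_const c).add hY
  rw [variance_eq_integral h.aemeasurable, variance_eq_integral hY.aemeasurable]
  have hint : ∫ ω, (c + Y ω) ∂μ = c + ∫ ω, Y ω ∂μ := by
    rw [integral_add (integrable_const c) (hY.integrable one_le_two)]
    simp
  congr 1
  funext ω
  simp only [Pi.pow_apply, Pi.sub_apply, hint]
  ring

/-- **Variance of returns after several cycles of a PAR process.**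
Let `(x k)` be a PAR process of period `p ≥ 1` with coefficients `α` (extended
`p`-periodically), independent innovations `ε` with mean `0` and variance `σ² > 0`,
deterministic initial condition `x 0 = x0`, and Floquet multiplier
`λ = ∏_{k=1}^p α k`.  Then for every `n ≥ 0`,
`Var (x (p + n*p)) = Var (x p) * ∑_{ℓ=0}^n (λ²)^ℓ`. -/
theorem par_return_variance_cycles
    {Ω : Type*} [MeasurableSpace Ω] (μ : Measure Ω) [IsProbabilityMeasure μ]
    (p : ℕ) (hp : 1 ≤ p)
    (α : ℕ → ℝ) (hper : ∀ k, α (k + p) = α k)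
    (σ2 : ℝ) (hσ2 : 0 < σ2)
    (ε x : ℕ → Ω → ℝ)
    (hεmeas : ∀ k, Measurable (ε k))
    (hindep : iIndepFun ε μ)
    (hmean : ∀ k, 1 ≤ k → ∫ ω, ε k ω ∂μ = 0)
    (hvar : ∀ k, 1 ≤ k → variance (ε k) μ = σ2)
    (hεint : ∀ k, MemLp (ε k) 2 μ)
    (x0 : ℝ) (hx0 : ∀ ω, x 0 ω = x0)
    (hrec : ∀ k, 1 ≤ k → ∀ ω, x k ω = α k * x (k - 1) ω + ε k ω)
    (n : ℕ) :
    variance (x (p + n * p)) μ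
      = variance (x p) μ
        * ∑ l ∈ Finset.range (n + 1), ((∏ k ∈ Finset.Icc 1 p, α k) ^ 2) ^ l := by
  classical
  set C : ℕ → ℕ → ℝ := fun i k => ∏ j ∈ Ioc i k, α j with hC
  set lam : ℝ := C 0 p with hlamdef
  -- the explicit solution of the recursion
  have hform : ∀ k, ∀ ω, x k ω = C 0 k * x0 + ∑ i ∈ Ioc 0 k, C i k * ε i ω := by
    intro k
    induction k with
    | zero => intro ω; simp [hC, hx0 ω]
    | succ k ih =>
      intro ω
      rw [hrec (k + 1) (Nat.succ_le_succ (Nat.zero_le k)) ω]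
      simp only [Nat.add_sub_cancel]
      rw [ih ω]
      have h1 : C 0 (k + 1) = C 0 k * α (k + 1) :=
        Finset.prod_Ioc_succ_top (Nat.zero_le k) α
      have h2 : ∑ i ∈ Ioc 0 (k + 1), C i (k + 1) * ε i ω
          = (∑ i ∈ Ioc 0 k, C i (k + 1) * ε i ω) + C (k + 1) (k + 1) * ε (k + 1) ω :=
        Finset.sum_Ioc_succ_top (Nat.zero_le k) _
      have h3 : ∀ i ∈ Ioc 0 k, C i (k + 1) * ε i ω = (C i k * α (k + 1)) * ε i ω := by
        intro i hi
        simp only [hC]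
        rw [Finset.prod_Ioc_succ_top (Finset.mem_Ioc.1 hi).2 α]
      have h4 : C (k + 1) (k + 1) = 1 := by simp [hC]
      have h5 : ∑ i ∈ Ioc 0 k, C i k * α (k + 1) * ε i ω
          = α (k + 1) * ∑ i ∈ Ioc 0 k, C i k * ε i ω := by
        rw [Finset.mul_sum]
        exact Finset.sum_congr rfl fun i _ => by ring
      rw [h2, Finset.sum_congr rfl h3, h4, h1, h5]
      ring
  -- variance formula
  have hvarx : ∀ k, variance (x k) μ = σ2 * ∑ i ∈ Ioc 0 k, (C i k) ^ 2 := by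
    intro k
    have hmem : ∀ i ∈ Ioc 0 k, MemLp (fun ω => C i k * ε i ω) 2 μ :=
      fun i _ => (hεint i).const_mul _
    have hY : MemLp (∑ i ∈ Ioc 0 k, fun ω => C i k * ε i ω) 2 μ :=
      memLp_finset_sum' _ hmem
    have hxk : x k = fun ω => C 0 k * x0 + (∑ i ∈ Ioc 0 k, fun ω => C i k * ε i ω) ω := by
      funext ω
      rw [hform k ω, Finset.sum_apply]
    rw [hxk, par_aux_variance_const_add μ _ _ hY]
    rw [IndepFun.variance_sum hmem ?_]
    · rw [Finset.mul_sum]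
      apply Finset.sum_congr rfl
      intro i hi
      rw [variance_const_mul, hvar i (Finset.mem_Ioc.1 hi).1]
      ring
    · intro i _ j _ hij
      exact (hindep.indepFun hij).comp (measurable_const_mul _) (measurable_const_mul _)
  -- shift invariance of products
  have hshift1 : ∀ a b : ℕ, ∏ j ∈ Ioc (a + p) (b + p), α j = ∏ j ∈ Ioc a b, α j := by
    intro a b
    rw [← Finset.map_add_right_Ioc, Finset.prod_map]
    exact Finset.prod_congr rfl fun j _ => by simp [hper j]
  have hshift : ∀ q a b : ℕ, ∏ j ∈ Ioc (a + q * p) (b + q * p), α j = ∏ j ∈ Ioc a b, α j := by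
    intro q
    induction q with
    | zero => simp
    | succ q ih =>
      intro a b
      have : ∀ c : ℕ, c + (q + 1) * p = (c + q * p) + p := by intro c; ring
      rw [this a, this b, hshift1, ih]
  -- the key recursion for the sums S m := ∑ i ∈ Ioc 0 m, (C i m)^2
  have hstep : ∀ q : ℕ,
      ∑ i ∈ Ioc 0 (q * p + p), (C i (q * p + p)) ^ 2
        = lam ^ 2 * (∑ i ∈ Ioc 0 (q * p), (C i (q * p)) ^ 2)
          + ∑ i ∈ Ioc 0 p, (C i p) ^ 2 := by
    intro q
    set m := q * p with hm
    have hsplit : (∑ i ∈ Ioc 0 m, (C i (m + p)) ^ 2)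
        + ∑ i ∈ Ioc m (m + p), (C i (m + p)) ^ 2
        = ∑ i ∈ Ioc 0 (m + p), (C i (m + p)) ^ 2 :=
      Finset.sum_Ioc_consecutive _ (Nat.zero_le m) (Nat.le_add_right m p)
    have hCm : C m (m + p) = lam := by
      have := hshift q 0 p
      simp only [zero_add] at this
      rw [hlamdef, hC]
      simp only
      rw [← this]
      congr 1
      rw [add_comm m p, hm]
    have h1 : ∑ i ∈ Ioc 0 m, (C i (m + p)) ^ 2
        = lam ^ 2 * ∑ i ∈ Ioc 0 m, (C i m) ^ 2 := by
      rw [Finset.mul_sum]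
      apply Finset.sum_congr rfl
      intro i hi
      have hcons : C i m * C m (m + p) = C i (m + p) :=
        Finset.prod_Ioc_consecutive α (Finset.mem_Ioc.1 hi).2 (Nat.le_add_right m p)
      rw [← hcons, hCm]
      ring
    have h2 : ∑ i ∈ Ioc m (m + p), (C i (m + p)) ^ 2 = ∑ i ∈ Ioc 0 p, (C i p) ^ 2 := by
      have hmap : Ioc m (m + p) = (Ioc 0 p).map (addRightEmbedding m) := by
        rw [Finset.map_add_right_Ioc]
        simp [add_comm]
      rw [hmap, Finset.sum_map]
      apply Finset.sum_congr rfl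
      intro r hr
      simp only [addRightEmbedding_apply]
      congr 1
      show ∏ j ∈ Ioc (r + m) (m + p), α j = ∏ j ∈ Ioc r p, α j
      rw [add_comm m p, hm, ← hshift q r p]
    rw [← hsplit, h1, h2]
  -- geometric sum identity
  have hgeom : ∀ N : ℕ, ∑ i ∈ Ioc 0 (N * p), (C i (N * p)) ^ 2
      = (∑ i ∈ Ioc 0 p, (C i p) ^ 2) * ∑ l ∈ Finset.range N, (lam ^ 2) ^ l := by
    intro N
    induction N with
    | zero => simp
    | succ N ih =>
      rw [Nat.succ_mul, hstep N, ih, geom_sum_succ]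
      ring
  -- conclusion
  have hI : Finset.Icc 1 p = Finset.Ioc 0 p := Finset.Icc_add_one_left_eq_Ioc 0 p
  have hidx : p + n * p = (n + 1) * p := by ring
  rw [hidx, hvarx, hvarx, hgeom (n + 1), hI]
  rw [hlamdef, hC]
  ring
end

section
/- Let (x_k) be a periodic autoregressive (PAR) process of period p with coefficients (α_k), innovations of variance σ², deterministic initial condition x_0, and Floquet multiplier λ = ∏_{k=1}^{p} α_k, and suppose |λ| < 1. Then for each k ∈ {1, …, p}, the variance of returns to section k converges: lim_{n→∞} Var(x_{(k+p) + np}) = (σ²/(1 − λ²)) · (1 + Σ_{i=2}^{p} ∏_{j=i}^{p} α_{j+k}²), where the coefficient indices are taken modulo p. In particular, the limit does not depend on the initial condition x_0. -/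
open MeasureTheory ProbabilityTheory Filter Finset


lemma par_prod_range_period (p : ℕ) (f : ℕ → ℝ) (hper : ∀ k, f (k + p) = f k) (m : ℕ) :
    ∏ j ∈ Finset.range p, f (m + j) = ∏ j ∈ Finset.range p, f j := by
  induction m with
  | zero => simp
  | succ m ih =>
    rw [← ih]
    cases p with
    | zero => simp
    | succ n =>
      rw [Finset.prod_range_succ, Finset.prod_range_succ']
      have h1 : f (m + 1 + n) = f m := by
        rw [show m + 1 + n = m + (n + 1) from by omega, hper]
      rw [h1]
      congr 1
      apply Finset.prod_congr rfl
      intro j _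
      congr 1
      omega

lemma par_prod_Ioc_period (p : ℕ) (f : ℕ → ℝ) (hper : ∀ k, f (k + p) = f k) (m : ℕ) :
    ∏ j ∈ Finset.Ioc m (m + p), f j = ∏ j ∈ Finset.Ioc 0 p, f j := by
  have h : ∀ a : ℕ, ∏ j ∈ Finset.Ioc a (a + p), f j = ∏ j ∈ Finset.range p, f (a + 1 + j) := by
    intro a
    rw [show Finset.Ioc a (a + p) = Finset.Ico (a + 1) (a + 1 + p) from by ext y; simp; omega,
      Finset.prod_Ico_eq_prod_range, show a + 1 + p - (a + 1) = p from by omega]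
  conv_rhs => rw [show Finset.Ioc 0 p = Finset.Ioc 0 (0 + p) from by rw [Nat.zero_add]]
  rw [h m, h 0, par_prod_range_period p f hper (m + 1), ← par_prod_range_period p f hper (0 + 1)]

lemma par_variance_const_add {Ω : Type*} [MeasurableSpace Ω] {μ : Measure Ω}
    [IsProbabilityMeasure μ] (c : ℝ) (Y : Ω → ℝ) (hY : Integrable Y μ) :
    variance (fun ω => c + Y ω) μ = variance Y μ := by
  have hint : ∫ ω, (c + Y ω) ∂μ = c + ∫ ω, Y ω ∂μ := by
    rw [integral_add (integrable_const c) hY, integral_const]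
    simp
  unfold variance evariance
  congr 1
  apply lintegral_congr
  intro ω
  have : c + Y ω - ∫ ω, (c + Y ω) ∂μ = Y ω - ∫ ω, Y ω ∂μ := by rw [hint]; ring
  rw [this]


lemma par_variance_formula
    {Ω : Type*} [MeasurableSpace Ω] (μ : Measure Ω) [IsProbabilityMeasure μ]
    (α : ℕ → ℝ) (σ2 : ℝ)
    (ε x : ℕ → Ω → ℝ)
    (hεmeas : ∀ k, Measurable (ε k))
    (hindep : iIndepFun ε μ)
    (hvar : ∀ k, 1 ≤ k → variance (ε k) μ = σ2)
    (hεint : ∀ k, MemLp (ε k) 2 μ)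
    (x0 : ℝ) (hx0 : ∀ ω, x 0 ω = x0)
    (hrec : ∀ k, 1 ≤ k → ∀ ω, x k ω = α k * x (k - 1) ω + ε k ω)
    (n : ℕ) :
    variance (x n) μ = σ2 * ∑ i ∈ Finset.Ioc 0 n, ∏ j ∈ Finset.Ioc i n, (α j) ^ 2 := by
  have hrep : ∀ n ω, x n ω = (∏ j ∈ Finset.Ioc 0 n, α j) * x0
      + ∑ i ∈ Finset.Ioc 0 n, (∏ j ∈ Finset.Ioc i n, α j) * ε i ω := by
    intro n
    induction n with
    | zero => intro ω; simp [hx0 ω]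
    | succ n ih =>
      intro ω
      have h1 := hrec (n + 1) (by omega) ω
      simp only [Nat.add_sub_cancel] at h1
      rw [h1, ih ω, Finset.prod_Ioc_succ_top (Nat.zero_le n),
        Finset.sum_Ioc_succ_top (Nat.zero_le n)]
      rw [show Finset.Ioc (n + 1) (n + 1) = ∅ from Finset.Ioc_self _, Finset.prod_empty]
      have hsum : ∑ i ∈ Finset.Ioc 0 n, (∏ j ∈ Finset.Ioc i (n + 1), α j) * ε i ω
          = ∑ i ∈ Finset.Ioc 0 n, α (n + 1) * ((∏ j ∈ Finset.Ioc i n, α j) * ε i ω) := by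
        apply Finset.sum_congr rfl
        intro i hi
        simp only [Finset.mem_Ioc] at hi
        rw [Finset.prod_Ioc_succ_top hi.2]
        ring
      rw [hsum, mul_add, Finset.mul_sum]
      ring
  have hx_eq : x n = fun ω => (∏ j ∈ Finset.Ioc 0 n, α j) * x0
      + ∑ i ∈ Finset.Ioc 0 n, (∏ j ∈ Finset.Ioc i n, α j) * ε i ω := funext (hrep n)
  have hYint : Integrable (fun ω => ∑ i ∈ Finset.Ioc 0 n,
      (∏ j ∈ Finset.Ioc i n, α j) * ε i ω) μ :=
    integrable_finset_sum _ fun i _ => ((hεint i).integrable one_le_two).const_mul _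
  rw [hx_eq, par_variance_const_add _ _ hYint]
  have hsplit : (fun ω => ∑ i ∈ Finset.Ioc 0 n, (∏ j ∈ Finset.Ioc i n, α j) * ε i ω)
      = ∑ i ∈ Finset.Ioc 0 n, (fun ω => (∏ j ∈ Finset.Ioc i n, α j) * ε i ω) := by
    funext ω
    simp [Finset.sum_apply]
  rw [hsplit, IndepFun.variance_sum
    (fun i _ => (hεint i).const_mul _)
    (fun i _ j _ hij => (hindep.indepFun hij).comp
      (measurable_const_mul ((∏ j ∈ Finset.Ioc i n, α j))) (measurable_const_mul _))]
  rw [Finset.mul_sum]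
  apply Finset.sum_congr rfl
  intro i hi
  simp only [Finset.mem_Ioc] at hi
  rw [variance_const_mul, hvar i hi.1, ← Finset.prod_pow]
  ring


lemma par_sum_rec (p : ℕ) (f : ℕ → ℝ) (hper : ∀ k, f (k + p) = f k) (m : ℕ) :
    ∑ i ∈ Finset.Ioc 0 (m + p), ∏ j ∈ Finset.Ioc i (m + p), f j
      = (∏ j ∈ Finset.Ioc 0 p, f j) * (∑ i ∈ Finset.Ioc 0 m, ∏ j ∈ Finset.Ioc i m, f j)
        + ∑ i ∈ Finset.Ioc m (m + p), ∏ j ∈ Finset.Ioc i (m + p), f j := by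
  rw [← Finset.sum_Ioc_consecutive _ (Nat.zero_le m) (Nat.le_add_right m p)]
  congr 1
  rw [Finset.mul_sum]
  apply Finset.sum_congr rfl
  intro i hi
  rw [Finset.mem_Ioc] at hi
  rw [← Finset.prod_Ioc_consecutive _ hi.2 (Nat.le_add_right m p),
    par_prod_Ioc_period p f hper m]
  ring

lemma par_tail_eq (p : ℕ) (f : ℕ → ℝ) (m : ℕ) :
    ∑ i ∈ Finset.Ioc m (m + p), ∏ j ∈ Finset.Ioc i (m + p), f j
      = ∑ i ∈ Finset.Ioc 0 p, ∏ j ∈ Finset.Ioc i p, f (j + m) := by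
  have h1 : Finset.Ioc m (m + p) = (Finset.Ioc 0 p).map (addRightEmbedding m) := by
    rw [Finset.map_add_right_Ioc, Nat.zero_add, Nat.add_comm p m]
  rw [h1, Finset.sum_map]
  apply Finset.sum_congr rfl
  intro i hi
  have h2 : Finset.Ioc ((addRightEmbedding m) i) (m + p)
      = (Finset.Ioc i p).map (addRightEmbedding m) := by
    rw [Finset.map_add_right_Ioc, Nat.add_comm p m]
    rfl
  rw [h2, Finset.prod_map]
  rfl

lemma par_linear_rec_tendsto (L c : ℝ) (hL0 : 0 ≤ L) (hL1 : L < 1) (v : ℕ → ℝ)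
    (hrec : ∀ n, v (n + 1) = L * v n + c) :
    Tendsto v atTop (nhds (c / (1 - L))) := by
  have h1L : (0:ℝ) < 1 - L := by linarith
  have hne : (1:ℝ) - L ≠ 0 := ne_of_gt h1L
  have hclosed : ∀ n, v n = c / (1 - L) + L ^ n * (v 0 - c / (1 - L)) := by
    intro n
    induction n with
    | zero => simp
    | succ n ih =>
      rw [hrec n, ih]
      field_simp
      ring
  have hten : Tendsto (fun n : ℕ => c / (1 - L) + L ^ n * (v 0 - c / (1 - L))) atTop
      (nhds (c / (1 - L))) := by
    have h0 := (tendsto_pow_atTop_nhds_zero_of_lt_one hL0 hL1).mul_const (v 0 - c / (1 - L))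
    have h2 := (tendsto_const_nhds (x := c / (1 - L))).add h0
    simpa using h2
  exact hten.congr fun n => (hclosed n).symm

/-- **Asymptotic variance of returns of a PAR process to each section.**
Let `(x k)` be a PAR process of period `p ≥ 1` with coefficients `α` (extended
`p`-periodically, which realizes the "indices mod p" convention), independent
innovations `ε` with mean `0` and variance `σ² > 0`, deterministic initial
condition `x 0 = x0`, and Floquet multiplier `λ = ∏_{k=1}^p α k` with `|λ| < 1`.
Then for each `k ∈ {1, …, p}`, the variance of returns to section `k` converges:
`lim_{n→∞} Var (x ((k+p) + n*p)) = σ²/(1-λ²) * (1 + ∑_{i=2}^p ∏_{j=i}^p (α (j+k))²)`.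
In particular the limit does not depend on the initial condition `x0`. -/
theorem par_asymptotic_return_variance
    {Ω : Type*} [MeasurableSpace Ω] (μ : Measure Ω) [IsProbabilityMeasure μ]
    (p : ℕ) (hp : 1 ≤ p)
    (α : ℕ → ℝ) (hper : ∀ k, α (k + p) = α k)
    (σ2 : ℝ) (hσ2 : 0 < σ2)
    (ε x : ℕ → Ω → ℝ)
    (hεmeas : ∀ k, Measurable (ε k))
    (hindep : iIndepFun ε μ)
    (hmean : ∀ k, 1 ≤ k → ∫ ω, ε k ω ∂μ = 0)
    (hvar : ∀ k, 1 ≤ k → variance (ε k) μ = σ2)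
    (hεint : ∀ k, MemLp (ε k) 2 μ)
    (x0 : ℝ) (hx0 : ∀ ω, x 0 ω = x0)
    (hrec : ∀ k, 1 ≤ k → ∀ ω, x k ω = α k * x (k - 1) ω + ε k ω)
    (hlam : |∏ k ∈ Finset.Icc 1 p, α k| < 1)
    (k : ℕ) (hk : k ∈ Finset.Icc 1 p) :
    Tendsto (fun n : ℕ => variance (x ((k + p) + n * p)) μ) atTop
      (nhds ((σ2 / (1 - (∏ k ∈ Finset.Icc 1 p, α k) ^ 2))
        * (1 + ∑ i ∈ Finset.Icc 2 p, ∏ j ∈ Finset.Icc i p, (α (j + k)) ^ 2))) := by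
  have hβper : ∀ m, (α (m + p)) ^ 2 = (α m) ^ 2 := fun m => by rw [hper]
  have hlamsq : (∏ k ∈ Finset.Icc 1 p, α k) ^ 2 = ∏ j ∈ Finset.Ioc 0 p, (α j) ^ 2 := by
    rw [Finset.prod_pow, show Finset.Ioc 0 p = Finset.Icc 1 p from by ext y; simp; omega]
  have hL0 : (0:ℝ) ≤ (∏ k ∈ Finset.Icc 1 p, α k) ^ 2 := sq_nonneg _
  have hL1 : (∏ k ∈ Finset.Icc 1 p, α k) ^ 2 < 1 := (sq_lt_one_iff_abs_lt_one _).mpr hlam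
  have hVar := par_variance_formula μ α σ2 ε x hεmeas hindep hvar hεint x0 hx0 hrec
  -- periodicity of the tail constant
  have hCper : ∀ m, (∑ i ∈ Finset.Ioc 0 p, ∏ j ∈ Finset.Ioc i p, (α (j + (m + p))) ^ 2)
      = ∑ i ∈ Finset.Ioc 0 p, ∏ j ∈ Finset.Ioc i p, (α (j + m)) ^ 2 := by
    intro m
    apply Finset.sum_congr rfl
    intro i _
    apply Finset.prod_congr rfl
    intro j _
    rw [show j + (m + p) = j + m + p from by omega, hper]
  have hCk : ∀ n : ℕ,
      (∑ i ∈ Finset.Ioc 0 p, ∏ j ∈ Finset.Ioc i p, (α (j + (k + p + n * p))) ^ 2)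
        = ∑ i ∈ Finset.Ioc 0 p, ∏ j ∈ Finset.Ioc i p, (α (j + k)) ^ 2 := by
    intro n
    induction n with
    | zero => simpa using hCper k
    | succ n ih =>
      have e : k + p + (n + 1) * p = k + p + n * p + p := by ring
      rw [e, hCper (k + p + n * p)]
      exact ih
  -- the one-period recurrence for the variance of returns
  have hstep : ∀ n : ℕ, variance (x (k + p + (n + 1) * p)) μ
      = (∏ k ∈ Finset.Icc 1 p, α k) ^ 2 * variance (x (k + p + n * p)) μ
        + σ2 * ∑ i ∈ Finset.Ioc 0 p, ∏ j ∈ Finset.Ioc i p, (α (j + k)) ^ 2 := by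
    intro n
    rw [hVar (k + p + (n + 1) * p), hVar (k + p + n * p), hlamsq]
    have e : k + p + (n + 1) * p = k + p + n * p + p := by ring
    rw [e, par_sum_rec p (fun j => (α j) ^ 2) hβper (k + p + n * p),
      par_tail_eq p (fun j => (α j) ^ 2) (k + p + n * p), hCk n]
    ring
  have hmain := par_linear_rec_tendsto ((∏ k ∈ Finset.Icc 1 p, α k) ^ 2)
    (σ2 * ∑ i ∈ Finset.Ioc 0 p, ∏ j ∈ Finset.Ioc i p, (α (j + k)) ^ 2) hL0 hL1
    (fun n => variance (x (k + p + n * p)) μ) hstep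
  -- identify the limit value
  have hcil : (∑ i ∈ Finset.Ioc 0 p, ∏ j ∈ Finset.Ioc i p, (α (j + k)) ^ 2)
      = 1 + ∑ i ∈ Finset.Icc 2 p, ∏ j ∈ Finset.Icc i p, (α (j + k)) ^ 2 := by
    obtain ⟨q, rfl⟩ : ∃ q, p = q + 1 := ⟨p - 1, by omega⟩
    rw [Finset.sum_Ioc_succ_top (Nat.zero_le q), Finset.Ioc_self, Finset.prod_empty, add_comm]
    congr 1
    rw [show Finset.Icc 2 (q + 1) = (Finset.Ioc 0 q).map (addRightEmbedding 1) from by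
      rw [Finset.map_add_right_Ioc]; ext y; simp; omega, Finset.sum_map]
    apply Finset.sum_congr rfl
    intro i hi
    rw [show (addRightEmbedding 1) i = i + 1 from rfl,
      show Finset.Icc (i + 1) (q + 1) = Finset.Ioc i (q + 1) from Finset.Icc_add_one_left_eq_Ioc i (q + 1)]
  have hval : σ2 / (1 - (∏ k ∈ Finset.Icc 1 p, α k) ^ 2)
        * (1 + ∑ i ∈ Finset.Icc 2 p, ∏ j ∈ Finset.Icc i p, (α (j + k)) ^ 2)
      = (σ2 * ∑ i ∈ Finset.Ioc 0 p, ∏ j ∈ Finset.Ioc i p, (α (j + k)) ^ 2)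
        / (1 - (∏ k ∈ Finset.Icc 1 p, α k) ^ 2) := by
    rw [hcil, div_mul_eq_mul_div]
  rw [hval]
  exact hmain
end

section
/- Let (x_k) be a Gaussian PAR process of period p with coefficients (α_k), i.i.d. innovations N(0, σ²), and deterministic initial condition x_0, observed for n cycles (i.e., the sample is (x_1, …, x_{np})). Then the Fisher information matrix I(α) for the parameter vector (α_1, …, α_p), defined as the negative expected Hessian of the log joint density, is diagonal, with diagonal entries [I(α)]_{kk} = (1/σ²) Σ_{m=0}^{n-1} E[x_{k-1+mp}²]. -/
open MeasureTheory ProbabilityTheory Filter Finset Real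

/-- The log joint density `ℓ(α; y)` of a Gaussian PAR sample `(y 1, …, y np)`
over `n` cycles (given `y 0`), viewed as a function of the parameter vector
`a = (α_1, …, α_p)` (zero-based: `a i` is `α_{i+1}`). -/
noncomputable def parLogLik (p : ℕ) (hp : 0 < p) (np : ℕ) (σ2 : ℝ) (y : ℕ → ℝ)
    (a : Fin p → ℝ) : ℝ :=
  ∑ k ∈ Finset.Icc 1 np,
    (-(1 / 2) * Real.log (2 * Real.pi * σ2)
      - (y k - a ⟨(k - 1) % p, Nat.mod_lt _ hp⟩ * y (k - 1)) ^ 2 / (2 * σ2))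

/-- The standard Gaussian measure on `ℝ` has finite second moment. -/
lemma gauss_memL2 (v : NNReal) (hv : v ≠ 0) : MemLp (id : ℝ → ℝ) 2 (gaussianReal 0 v) := by
  have hvpos : (0:ℝ) < (v:ℝ) := by
    have := hv; positivity
  rw [gaussianReal_of_var_ne_zero 0 hv,
    memLp_two_iff_integrable_sq aestronglyMeasurable_id,
    integrable_withDensity_iff (measurable_gaussianPDF 0 v)
      (Filter.Eventually.of_forall fun x => ENNReal.ofReal_lt_top)]
  set b : ℝ := 1 / (2 * (v:ℝ)) with hb
  have hbpos : 0 < b := by positivity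
  have hint : Integrable (fun x : ℝ => x ^ 2 * Real.exp (-b * x ^ 2)) := by
    refine Integrable.mono' (((integrable_exp_neg_mul_sq (half_pos hbpos)).const_mul (2 / b)))
      ?_ (Filter.Eventually.of_forall fun x => ?_)
    · exact ((measurable_id.pow_const 2).mul
        (((measurable_id.pow_const 2).const_mul (-b)).exp)).aestronglyMeasurable
    · rw [Real.norm_eq_abs, abs_of_nonneg (by positivity)]
      have h1 : b / 2 * x ^ 2 ≤ Real.exp (b / 2 * x ^ 2) := by
        nlinarith [Real.add_one_le_exp (b / 2 * x ^ 2)]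
      have h2 : x ^ 2 ≤ 2 / b * Real.exp (b / 2 * x ^ 2) := by
        calc x ^ 2 = (b / 2 * x ^ 2) * (2 / b) := by
              field_simp
          _ ≤ Real.exp (b / 2 * x ^ 2) * (2 / b) :=
              mul_le_mul_of_nonneg_right h1 (by positivity)
          _ = 2 / b * Real.exp (b / 2 * x ^ 2) := by ring
      calc x ^ 2 * Real.exp (-b * x ^ 2)
          ≤ (2 / b * Real.exp (b / 2 * x ^ 2)) * Real.exp (-b * x ^ 2) := by
            exact mul_le_mul_of_nonneg_right h2 (Real.exp_pos _).le
        _ = 2 / b * Real.exp (-(b / 2) * x ^ 2) := by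
            rw [mul_assoc, ← Real.exp_add]; ring_nf
  have heq : (fun x : ℝ => (id x) ^ 2 * (gaussianPDF 0 v x).toReal)
      = fun x : ℝ => (Real.sqrt (2 * π * (v:ℝ)))⁻¹ * (x ^ 2 * Real.exp (-b * x ^ 2)) := by
    funext x
    rw [gaussianPDF, ENNReal.toReal_ofReal (gaussianPDFReal_nonneg _ _ _), gaussianPDFReal]
    have harg : -(x - 0) ^ 2 / (2 * (v:ℝ)) = -b * x ^ 2 := by
      rw [hb]; field_simp; ring
    rw [harg]; simp [id]; ring
  rw [heq]
  exact hint.const_mul _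

lemma par_hasDeriv1 (p : ℕ) (hp : 0 < p) (N : ℕ) (v : ℝ) (y : ℕ → ℝ)
    (a₀ : Fin p → ℝ) (k : Fin p) (s : ℝ) :
    HasDerivAt (fun s => parLogLik p hp N v y (Function.update a₀ k s))
      (∑ k' ∈ Finset.Icc 1 N,
        if (k' - 1) % p = (k : ℕ) then (y k' - s * y (k' - 1)) * y (k' - 1) / v else 0) s := by
  unfold parLogLik
  apply HasDerivAt.fun_sum
  intro k' _
  by_cases h : (k' - 1) % p = (k : ℕ)
  · have hfin : (⟨(k' - 1) % p, Nat.mod_lt _ hp⟩ : Fin p) = k := Fin.ext h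
    rw [if_pos h]
    have hfun : (fun s : ℝ => -(1 / 2) * Real.log (2 * Real.pi * v)
        - (y k' - Function.update a₀ k s ⟨(k' - 1) % p, Nat.mod_lt _ hp⟩ * y (k' - 1)) ^ 2
          / (2 * v))
        = (fun s : ℝ => -(1 / 2) * Real.log (2 * Real.pi * v)
            - (y k' - s * y (k' - 1)) ^ 2 / (2 * v)) := by
      funext t
      rw [hfin, Function.update_self]
    rw [hfun]
    have hb : HasDerivAt (fun s : ℝ => y k' - s * y (k' - 1)) (-(1 * y (k' - 1))) s :=
      ((hasDerivAt_id s).mul_const _).const_sub _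
    have := ((hb.fun_pow 2).div_const (2 * v)).const_sub
      (-(1 / 2) * Real.log (2 * Real.pi * v))
    refine this.congr_deriv ?_
    ring
  · have hfin : (⟨(k' - 1) % p, Nat.mod_lt _ hp⟩ : Fin p) ≠ k := fun hc => h (congrArg Fin.val hc)
    rw [if_neg h]
    have hfun : (fun s : ℝ => -(1 / 2) * Real.log (2 * Real.pi * v)
        - (y k' - Function.update a₀ k s ⟨(k' - 1) % p, Nat.mod_lt _ hp⟩ * y (k' - 1)) ^ 2
          / (2 * v))
        = (fun _ : ℝ => -(1 / 2) * Real.log (2 * Real.pi * v)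
            - (y k' - a₀ ⟨(k' - 1) % p, Nat.mod_lt _ hp⟩ * y (k' - 1)) ^ 2 / (2 * v)) := by
      funext t
      rw [Function.update_of_ne hfin]
    rw [hfun]
    exact hasDerivAt_const _ _

lemma par_deriv2 (p : ℕ) (hp : 0 < p) (N : ℕ) (v : ℝ) (y : ℕ → ℝ)
    (a₀ : Fin p → ℝ) (k : Fin p) (t : ℝ) :
    deriv (deriv (fun s => parLogLik p hp N v y (Function.update a₀ k s))) t
      = ∑ k' ∈ Finset.Icc 1 N,
          (if (k' - 1) % p = (k : ℕ) then -(y (k' - 1)) ^ 2 / v else 0) := by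
  have hd1 : deriv (fun s => parLogLik p hp N v y (Function.update a₀ k s))
      = fun s => ∑ k' ∈ Finset.Icc 1 N,
          if (k' - 1) % p = (k : ℕ) then (y k' - s * y (k' - 1)) * y (k' - 1) / v else 0 :=
    funext fun s => (par_hasDeriv1 p hp N v y a₀ k s).deriv
  rw [hd1]
  have h2 : HasDerivAt (fun s : ℝ => ∑ k' ∈ Finset.Icc 1 N,
      if (k' - 1) % p = (k : ℕ) then (y k' - s * y (k' - 1)) * y (k' - 1) / v else 0)
      (∑ k' ∈ Finset.Icc 1 N,
        if (k' - 1) % p = (k : ℕ) then -(y (k' - 1)) ^ 2 / v else 0) t := by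
    apply HasDerivAt.fun_sum
    intro k' _
    by_cases h : (k' - 1) % p = (k : ℕ)
    · simp only [if_pos h]
      have hb : HasDerivAt (fun s : ℝ => (y k' - s * y (k' - 1)) * y (k' - 1) / v)
          (-(1 * y (k' - 1)) * y (k' - 1) / v) t :=
        ((((hasDerivAt_id t).mul_const _).const_sub _).mul_const _).div_const _
      refine hb.congr_deriv ?_
      ring
    · simp only [if_neg h]
      exact hasDerivAt_const _ _
  exact h2.deriv

lemma sum_mod_eq (p n j : ℕ) (hj : j < p) (g : ℕ → ℝ) :
    ∑ i ∈ Finset.range (n * p), (if i % p = j then g i else 0)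
      = ∑ m ∈ Finset.range n, g (j + m * p) := by
  induction n with
  | zero => simp
  | succ n ih =>
    rw [Nat.succ_mul, Finset.sum_range_add, ih, Finset.sum_range_succ]
    congr 1
    rw [Finset.sum_congr rfl (fun i hi => by
      rw [Nat.add_comm, Nat.add_mul_mod_self_right, Nat.mod_eq_of_lt (Finset.mem_range.mp hi)]),
      Finset.sum_ite_eq' (Finset.range p) j]
    simp [Finset.mem_range.mpr hj, Nat.add_comm]

lemma par_deriv2' (p : ℕ) (hp : 0 < p) (n : ℕ) (v : ℝ) (y : ℕ → ℝ)
    (a₀ : Fin p → ℝ) (k : Fin p) (t : ℝ) :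
    deriv (deriv (fun s => parLogLik p hp (n * p) v y (Function.update a₀ k s))) t
      = -(1 / v) * ∑ m ∈ Finset.range n, (y ((k : ℕ) + m * p)) ^ 2 := by
  rw [par_deriv2]
  rw [← Finset.Ico_add_one_right_eq_Icc, Finset.sum_Ico_eq_sum_range]
  simp only [Nat.add_sub_cancel, Nat.add_sub_cancel_left]
  have := sum_mod_eq p n (k : ℕ) k.isLt (fun i => -(y i) ^ 2 / v)
  rw [this, Finset.mul_sum]
  exact Finset.sum_congr rfl fun m _ => by ring

lemma par_mixed (p : ℕ) (hp : 0 < p) (N : ℕ) (v : ℝ) (y : ℕ → ℝ)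
    (a₀ : Fin p → ℝ) (k j : Fin p) (c t₀ : ℝ) :
    deriv (fun t : ℝ => deriv (fun s : ℝ =>
        parLogLik p hp N v y (Function.update (Function.update a₀ j t) k s)) c) t₀ = 0 := by
  have key : ∀ t s : ℝ,
      parLogLik p hp N v y (Function.update (Function.update a₀ j t) k s)
        - parLogLik p hp N v y (Function.update (Function.update a₀ j 0) k s)
      = parLogLik p hp N v y (Function.update (Function.update a₀ j t) k 0)
        - parLogLik p hp N v y (Function.update (Function.update a₀ j 0) k 0) := by
    intro t s
    unfold parLogLik
    rw [← Finset.sum_sub_distrib, ← Finset.sum_sub_distrib]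
    apply Finset.sum_congr rfl
    intro k' _
    by_cases hik : (⟨(k' - 1) % p, Nat.mod_lt _ hp⟩ : Fin p) = k
    · have h1 : ∀ t s : ℝ,
          Function.update (Function.update a₀ j t) k s ⟨(k' - 1) % p, Nat.mod_lt _ hp⟩ = s :=
        fun t s => by rw [hik, Function.update_self]
      simp only [h1]
      ring
    · have h1 : ∀ t s : ℝ,
          Function.update (Function.update a₀ j t) k s ⟨(k' - 1) % p, Nat.mod_lt _ hp⟩
            = Function.update a₀ j t ⟨(k' - 1) % p, Nat.mod_lt _ hp⟩ :=
        fun t s => Function.update_of_ne hik _ _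
      simp only [h1]
  have houter : (fun t : ℝ => deriv (fun s : ℝ =>
        parLogLik p hp N v y (Function.update (Function.update a₀ j t) k s)) c)
      = fun _ : ℝ => deriv (fun s : ℝ =>
        parLogLik p hp N v y (Function.update (Function.update a₀ j 0) k s)) c := by
    funext t
    have hfun : (fun s : ℝ =>
        parLogLik p hp N v y (Function.update (Function.update a₀ j t) k s))
        = fun s : ℝ =>
          parLogLik p hp N v y (Function.update (Function.update a₀ j 0) k s)
            + (parLogLik p hp N v y (Function.update (Function.update a₀ j t) k 0)
              - parLogLik p hp N v y (Function.update (Function.update a₀ j 0) k 0)) := by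
      funext s
      have := key t s
      linarith
    rw [hfun, deriv_add_const]
  rw [houter]
  exact deriv_const _ _

/-- **The Fisher information matrix of a Gaussian PAR process is diagonal.**
Let `(x k)` be a Gaussian PAR process of period `p` with coefficients `α`
(extended `p`-periodically), i.i.d. innovations `ε k ~ N(0, v)`, deterministic
initial condition `x 0 = x0`, observed for `n` cycles.  The Fisher information
matrix for the parameter vector `(α_1, …, α_p)` — the negative expected Hessian
of the log joint density, evaluated at the true parameter `a₀` — is diagonal,
with diagonal entries `[I(α)]_kk = (1/σ²) ∑_{m=0}^{n-1} E[x_{k-1+mp}²]`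
(zero-based: the entry for coordinate `k` is `(1/σ²) ∑_{m<n} E[(x (k + m*p))²]`). -/
theorem gaussian_par_fisher_information_diagonal
    {Ω : Type*} [MeasurableSpace Ω] (μ : Measure Ω) [IsProbabilityMeasure μ]
    (p : ℕ) (hp : 0 < p) (n : ℕ) (hn : 0 < n)
    (α : ℕ → ℝ) (hper : ∀ k, α (k + p) = α k)
    (v : NNReal) (hv : 0 < v)
    (ε x : ℕ → Ω → ℝ)
    (hεmeas : ∀ k, Measurable (ε k))
    (hindep : iIndepFun ε μ)
    (hgauss : ∀ k, 1 ≤ k → Measure.map (ε k) μ = gaussianReal 0 v)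
    (x0 : ℝ) (hx0 : ∀ ω, x 0 ω = x0)
    (hrec : ∀ k, 1 ≤ k → ∀ ω, x k ω = α k * x (k - 1) ω + ε k ω)
    (a₀ : Fin p → ℝ) (ha₀ : ∀ i : Fin p, a₀ i = α ((i : ℕ) + 1)) :
    (∀ k j : Fin p, k ≠ j →
      -∫ ω, deriv (fun t : ℝ =>
          deriv (fun s : ℝ =>
              parLogLik p hp (n * p) (v : ℝ) (fun i => x i ω)
                (Function.update (Function.update a₀ j t) k s)) (a₀ k)) (a₀ j) ∂μ
        = 0)
    ∧ (∀ k : Fin p,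
        -∫ ω, deriv (deriv (fun s : ℝ =>
            parLogLik p hp (n * p) (v : ℝ) (fun i => x i ω)
              (Function.update a₀ k s))) (a₀ k) ∂μ
          = (1 / (v : ℝ))
              * ∑ m ∈ Finset.range n, ∫ ω, (x ((k : ℕ) + m * p) ω) ^ 2 ∂μ) := by
  constructor
  · intro k j hkj
    have hz : ∀ ω : Ω, deriv (fun t : ℝ => deriv (fun s : ℝ =>
        parLogLik p hp (n * p) (v : ℝ) (fun i => x i ω)
          (Function.update (Function.update a₀ j t) k s)) (a₀ k)) (a₀ j) = 0 :=
      fun ω => par_mixed p hp (n * p) (v : ℝ) (fun i => x i ω) a₀ k j (a₀ k) (a₀ j)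
    simp only [hz, integral_zero, neg_zero]
  · intro k
    have hx_meas : ∀ m : ℕ, Measurable (x m) := by
      intro m
      induction m with
      | zero =>
        have h0 : x 0 = fun _ => x0 := funext hx0
        rw [h0]; exact measurable_const
      | succ m ih =>
        have h1 : x (m + 1) = fun ω => α (m + 1) * x m ω + ε (m + 1) ω := by
          funext ω
          simpa using hrec (m + 1) (Nat.succ_le_succ (Nat.zero_le m)) ω
        rw [h1]
        exact (ih.const_mul _).add (hεmeas _)
    have hεL2 : ∀ m : ℕ, 1 ≤ m → MemLp (ε m) 2 μ := by
      intro m hm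
      have h := gauss_memL2 v hv.ne'
      rw [← hgauss m hm] at h
      have := (memLp_map_measure_iff aestronglyMeasurable_id
        (hεmeas m).aemeasurable).mp h
      simpa [Function.comp] using this
    have hxL2 : ∀ m : ℕ, MemLp (x m) 2 μ := by
      intro m
      induction m with
      | zero =>
        have h0 : x 0 = fun _ => x0 := funext hx0
        rw [h0]; exact memLp_const _
      | succ m ih =>
        have h1 : x (m + 1) = fun ω => α (m + 1) * x m ω + ε (m + 1) ω := by
          funext ω
          simpa using hrec (m + 1) (Nat.succ_le_succ (Nat.zero_le m)) ω
        rw [h1]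
        exact (ih.const_mul _).add (hεL2 (m + 1) (Nat.succ_le_succ (Nat.zero_le m)))
    have hint : ∀ m : ℕ, Integrable (fun ω => (x m ω) ^ 2) μ :=
      fun m => (hxL2 m).integrable_sq
    have hpt : ∀ ω : Ω, deriv (deriv (fun s : ℝ =>
        parLogLik p hp (n * p) (v : ℝ) (fun i => x i ω) (Function.update a₀ k s))) (a₀ k)
        = -(1 / (v : ℝ)) * ∑ m ∈ Finset.range n, (x ((k : ℕ) + m * p) ω) ^ 2 :=
      fun ω => par_deriv2' p hp n (v : ℝ) (fun i => x i ω) a₀ k (a₀ k)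
    simp only [hpt]
    rw [MeasureTheory.integral_const_mul,
      MeasureTheory.integral_finset_sum _ (fun m _ => hint _)]
    ring
end

section
/- Let τ > 0 and let φ : ℝ → ℝ be continuous with φ(t) ≠ 0 for all t. Then the Riemann-type double sums converge to the corresponding double integral in the continuum limit of equally spaced sections: lim_{p→∞} (τ/p) Σ_{k=1}^{p} [ (τ/p) Σ_{i=1}^{p} (φ(kτ/p + τ)/φ((i+k)τ/p))² ]^{-1} = ∫_0^τ ( ∫_0^τ (φ(s+τ)/φ(t+s))² dt )^{-1} ds. -/
open Filter Finset MeasureTheory intervalIntegral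

lemma riemann_est {ψ : ℝ → ℝ} (hψ : Continuous ψ) {τ : ℝ} (hτ : 0 < τ) {ε : ℝ} (hε : 0 < ε) :
    ∃ δ > 0, ∀ s ∈ Set.Icc (0:ℝ) τ, ∀ p : ℕ, 1 ≤ p → τ / p < δ →
      |(τ / p) * ∑ i ∈ Finset.Icc 1 p, ψ (s + i * (τ / p)) - ∫ u in s..(s + τ), ψ u| ≤ ε * τ := by
  have hu : UniformContinuousOn ψ (Set.Icc 0 (2*τ)) :=
    isCompact_Icc.uniformContinuousOn_of_continuous hψ.continuousOn
  rw [Metric.uniformContinuousOn_iff_le] at hu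
  obtain ⟨δ, hδ, hδ'⟩ := hu ε hε
  refine ⟨δ, hδ, ?_⟩
  rintro s ⟨hs0, hsτ⟩ p hp hpδ
  have hp0 : (0:ℝ) < p := by exact_mod_cast Nat.lt_of_lt_of_le Nat.zero_lt_one hp
  set h := τ / p with hh
  have hh0 : 0 < h := div_pos hτ hp0
  have hph : (p:ℝ) * h = τ := by rw [hh]; field_simp
  set a : ℕ → ℝ := fun i => s + i * h with ha
  have hint : ∀ (x y : ℝ), IntervalIntegrable ψ volume x y := fun x y =>
    hψ.intervalIntegrable x y
  have hsplit : (∫ u in s..(s + τ), ψ u) = ∑ i ∈ Finset.range p, ∫ u in a i..a (i+1), ψ u := by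
    rw [intervalIntegral.sum_integral_adjacent_intervals (fun k _ => hint _ _)]
    have h0 : a 0 = s := by simp [ha]
    have h1 : a p = s + τ := by simp [ha, hph]
    rw [h0, h1]
  have hsum : (τ / p) * ∑ i ∈ Finset.Icc 1 p, ψ (s + i * (τ / p))
      = ∑ i ∈ Finset.range p, h * ψ (a (i+1)) := by
    rw [Finset.mul_sum, ← Finset.Ico_add_one_right_eq_Icc, Finset.sum_Ico_eq_sum_range]
    simp only [Nat.add_sub_cancel, ha]
    refine Finset.sum_congr rfl fun i _ => ?_
    rw [Nat.add_comm 1 i]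
  have key : ∀ i ∈ Finset.range p, |h * ψ (a (i+1)) - ∫ u in a i..a (i+1), ψ u| ≤ ε * h := by
    intro i hi
    have hip : (i:ℝ) + 1 ≤ p := by
      have := Finset.mem_range.mp hi; exact_mod_cast Nat.succ_le_of_lt this
    have haii : a (i+1) - a i = h := by simp [ha]; push_cast; ring
    have hmemK : ∀ u, a i ≤ u → u ≤ a (i+1) → u ∈ Set.Icc (0:ℝ) (2*τ) := by
      intro u hu1 hu2
      have hu1' : s + (i:ℝ) * h ≤ u := by simpa [ha] using hu1
      have hu2' : u ≤ s + ((i:ℝ)+1) * h := by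
        have := hu2; simp only [ha] at this; push_cast at this; linarith
      have hih : (0:ℝ) ≤ (i:ℝ) * h := by positivity
      have hup : ((i:ℝ)+1) * h ≤ (p:ℝ) * h := by nlinarith
      constructor
      · linarith
      · nlinarith
    have hconst : (∫ u in a i..a (i+1), ψ (a (i+1))) = h * ψ (a (i+1)) := by
      rw [intervalIntegral.integral_const, smul_eq_mul, haii]
    have hdiff : h * ψ (a (i+1)) - (∫ u in a i..a (i+1), ψ u)
        = ∫ u in a i..a (i+1), (ψ (a (i+1)) - ψ u) := by
      rw [intervalIntegral.integral_sub (intervalIntegrable_const) (hint _ _), hconst]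
    rw [hdiff]
    have hle : a i ≤ a (i+1) := by nlinarith [haii]
    have hbound : ∀ u ∈ Set.uIoc (a i) (a (i+1)), ‖ψ (a (i+1)) - ψ u‖ ≤ ε := by
      intro u hu
      rw [Set.uIoc_of_le hle] at hu
      obtain ⟨hu1, hu2⟩ := hu
      have hKu : u ∈ Set.Icc (0:ℝ) (2*τ) := hmemK u (le_of_lt hu1) hu2
      have hKa : a (i+1) ∈ Set.Icc (0:ℝ) (2*τ) := hmemK _ hle le_rfl
      have hdist : dist (a (i+1)) u ≤ δ := by
        rw [Real.dist_eq, abs_of_nonneg (by linarith)]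
        have : a (i+1) - u < h := by nlinarith [haii]
        linarith
      simpa [Real.norm_eq_abs, Real.dist_eq] using hδ' _ hKa _ hKu hdist
    calc ‖∫ u in a i..a (i+1), (ψ (a (i+1)) - ψ u)‖
        ≤ ε * |a (i+1) - a i| :=
          intervalIntegral.norm_integral_le_of_norm_le_const hbound
      _ = ε * h := by rw [haii, abs_of_pos hh0]
  calc |(τ / p) * ∑ i ∈ Finset.Icc 1 p, ψ (s + i * (τ / p)) - ∫ u in s..(s + τ), ψ u|
      = |∑ i ∈ Finset.range p, (h * ψ (a (i+1)) - ∫ u in a i..a (i+1), ψ u)| := by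
        rw [hsum, hsplit, Finset.sum_sub_distrib]
    _ ≤ ∑ i ∈ Finset.range p, |h * ψ (a (i+1)) - ∫ u in a i..a (i+1), ψ u| :=
        Finset.abs_sum_le_sum_abs _ _
    _ ≤ ∑ i ∈ Finset.range p, ε * h := Finset.sum_le_sum key
    _ = ε * τ := by rw [Finset.sum_const, Finset.card_range, nsmul_eq_mul]; rw [hh]; field_simp

set_option maxHeartbeats 1000000 in
/-- **Continuum limit of the section-based Riemann sums.**
Let `τ > 0` and let `φ : ℝ → ℝ` be continuous and nowhere vanishing.  Then the
Riemann-type double sums over `p` equally spaced sections converge, as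
`p → ∞`, to the corresponding double integral:
`(τ/p) ∑_{k=1}^p [ (τ/p) ∑_{i=1}^p (φ(kτ/p + τ)/φ((i+k)τ/p))² ]⁻¹
   → ∫_0^τ ( ∫_0^τ (φ(s+τ)/φ(t+s))² dt )⁻¹ ds`. -/
theorem continuum_limit_of_section_sums
    (τ : ℝ) (hτ : 0 < τ) (φ : ℝ → ℝ)
    (hφc : Continuous φ) (hφ0 : ∀ t, φ t ≠ 0) :
    Tendsto
      (fun p : ℕ =>
        (τ / p) * ∑ k ∈ Finset.Icc 1 p,
          ((τ / p) * ∑ i ∈ Finset.Icc 1 p,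
              (φ ((k : ℝ) * τ / p + τ) / φ (((i : ℝ) + (k : ℝ)) * τ / p)) ^ 2)⁻¹)
      atTop
      (nhds (∫ s in (0:ℝ)..τ, (∫ t in (0:ℝ)..τ, (φ (s + τ) / φ (t + s)) ^ 2)⁻¹)) := by
  set ψ : ℝ → ℝ := fun u => ((φ u) ^ 2)⁻¹ with hψdef
  have hφ2pos : ∀ u, 0 < (φ u) ^ 2 := fun u => pow_two_pos_of_ne_zero (hφ0 u)
  have hψc : Continuous ψ := (hφc.pow 2).inv₀ fun u => (hφ2pos u).ne'
  have hψpos : ∀ u, 0 < ψ u := fun u => inv_pos.mpr (hφ2pos u)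
  have hint : ∀ a b : ℝ, IntervalIntegrable ψ volume a b := fun a b => hψc.intervalIntegrable a b
  set J : ℝ → ℝ := fun s => ∫ u in s..(s + τ), ψ u with hJdef
  have hJpos : ∀ s, 0 < J s := fun s =>
    intervalIntegral.intervalIntegral_pos_of_pos (hint s (s + τ)) hψpos (by linarith)
  have hJcont : Continuous J := by
    have h1 : Continuous fun x => ∫ u in (0:ℝ)..x, ψ u :=
      intervalIntegral.continuous_primitive hint 0
    have hJ : J = fun s => (∫ u in (0:ℝ)..(s + τ), ψ u) - ∫ u in (0:ℝ)..s, ψ u := by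
      funext s
      have := intervalIntegral.integral_add_adjacent_intervals (hint 0 s) (hint s (s + τ))
      simp only [hJdef]
      linarith
    rw [hJ]
    exact (h1.comp (continuous_id.add continuous_const)).sub h1
  set G : ℝ → ℝ := fun s => (φ (s + τ)) ^ 2 * J s with hGdef
  have hGpos : ∀ s, 0 < G s := fun s => mul_pos (hφ2pos _) (hJpos s)
  have hGcont : Continuous G :=
    ((hφc.comp (continuous_id.add continuous_const)).pow 2).mul hJcont
  set F : ℝ → ℝ := fun s => (G s)⁻¹ with hFdef
  have hFc : Continuous F := hGcont.inv₀ fun s => (hGpos s).ne'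
  -- rewrite the limit
  have hL : (∫ s in (0:ℝ)..τ, (∫ t in (0:ℝ)..τ, (φ (s + τ) / φ (t + s)) ^ 2)⁻¹)
      = ∫ s in (0:ℝ)..τ, F s := by
    refine intervalIntegral.integral_congr fun s _ => ?_
    have hinner : (∫ t in (0:ℝ)..τ, (φ (s + τ) / φ (t + s)) ^ 2) = G s := by
      have heq : ∀ t, (φ (s + τ) / φ (t + s)) ^ 2 = (φ (s + τ)) ^ 2 * ψ (t + s) := by
        intro t; rw [div_pow, div_eq_mul_inv]
      rw [intervalIntegral.integral_congr (g := fun t => (φ (s + τ)) ^ 2 * ψ (t + s))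
        (fun t _ => heq t), intervalIntegral.integral_const_mul,
        intervalIntegral.integral_comp_add_right ψ s, zero_add, add_comm τ s]
    simp only [hinner, hFdef]
  rw [hL]
  -- extrema of ψ on [0, 2τ]
  have hK : IsCompact (Set.Icc (0:ℝ) (2 * τ)) := isCompact_Icc
  have hKne : (Set.Icc (0:ℝ) (2 * τ)).Nonempty := Set.nonempty_Icc.mpr (by linarith)
  obtain ⟨xm, hxm, hxmmin⟩ := hK.exists_isMinOn hKne hψc.continuousOn
  obtain ⟨xM, hxM, hxMmax⟩ := hK.exists_isMaxOn hKne hψc.continuousOn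
  set m := ψ xm with hmdef
  set M := ψ xM with hMdef
  have hm0 : 0 < m := hψpos xm
  have hM0 : 0 < M := hψpos xM
  have hmle : ∀ u ∈ Set.Icc (0:ℝ) (2 * τ), m ≤ ψ u := fun u hu => hxmmin hu
  have hMge : ∀ u ∈ Set.Icc (0:ℝ) (2 * τ), ψ u ≤ M := fun u hu => hxMmax hu
  -- lower bound for J on [0, τ]
  have hJlb : ∀ s ∈ Set.Icc (0:ℝ) τ, τ * m ≤ J s := by
    rintro s ⟨hs0, hsτ⟩
    have hmono : (∫ u in s..(s + τ), (m:ℝ)) ≤ ∫ u in s..(s + τ), ψ u :=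
      intervalIntegral.integral_mono_on (by linarith) intervalIntegrable_const (hint _ _)
        (fun x hx => hmle x ⟨by linarith [hx.1], by linarith [hx.2]⟩)
    have hcst : (∫ u in s..(s + τ), (m:ℝ)) = τ * m := by
      rw [intervalIntegral.integral_const, smul_eq_mul]; ring_nf
    rw [hcst] at hmono
    simpa [hJdef] using hmono
  -- the constant C1
  set C1 : ℝ := M * τ / ((τ * m) * (τ * m)) with hC1def
  have hC1 : 0 < C1 := by positivity
  rw [Metric.tendsto_atTop]
  intro ε hε
  have hε1 : (0:ℝ) < ε / (2 * (τ * C1 + 1)) := by positivity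
  have hε2 : (0:ℝ) < ε / (2 * (τ + 1)) := by positivity
  obtain ⟨δ1, hδ1, hδ1'⟩ := riemann_est hψc hτ hε1
  obtain ⟨δ2, hδ2, hδ2'⟩ := riemann_est hFc hτ hε2
  obtain ⟨N0, hN0⟩ := exists_nat_gt (τ / min δ1 δ2)
  refine ⟨max N0 1, fun p hp => ?_⟩
  have hp1 : 1 ≤ p := le_trans (le_max_right _ _) hp
  have hp0 : (0:ℝ) < p := by exact_mod_cast Nat.lt_of_lt_of_le Nat.zero_lt_one hp1
  have hδp : τ / p < min δ1 δ2 := by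
    have hN0p : (N0:ℝ) ≤ p := by exact_mod_cast le_trans (le_max_left _ _) hp
    have hmin : 0 < min δ1 δ2 := lt_min hδ1 hδ2
    have hN0pos : (0:ℝ) < N0 := lt_of_le_of_lt (by positivity) hN0
    have h1 : τ / (N0:ℝ) < min δ1 δ2 := by
      rw [div_lt_iff₀ hN0pos]
      rw [div_lt_iff₀ hmin] at hN0
      nlinarith
    calc τ / (p:ℝ) ≤ τ / (N0:ℝ) :=
          div_le_div_of_nonneg_left (le_of_lt hτ) hN0pos hN0p
      _ < min δ1 δ2 := h1
  have hδp1 : τ / p < δ1 := lt_of_lt_of_le hδp (min_le_left _ _)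
  have hδp2 : τ / p < δ2 := lt_of_lt_of_le hδp (min_le_right _ _)
  -- per-k inner estimate
  have hkest : ∀ k ∈ Finset.Icc 1 p,
      |((τ / p) * ∑ i ∈ Finset.Icc 1 p,
          (φ ((k : ℝ) * τ / p + τ) / φ (((i : ℝ) + (k : ℝ)) * τ / p)) ^ 2)⁻¹
        - F ((k : ℝ) * τ / p)| ≤ (ε / (2 * (τ * C1 + 1))) * C1 := by
    intro k hk
    obtain ⟨hk1, hkp⟩ := Finset.mem_Icc.mp hk
    set sk : ℝ := (k : ℝ) * τ / p with hskdef
    have hkpR : (k:ℝ) ≤ p := by exact_mod_cast hkp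
    have hsk : sk ∈ Set.Icc (0:ℝ) τ := by
      constructor
      · positivity
      · rw [hskdef, div_le_iff₀ hp0]; nlinarith
    set Sk : ℝ := (τ / p) * ∑ i ∈ Finset.Icc 1 p, ψ (sk + i * (τ / p)) with hSkdef
    have hpts : ∀ i ∈ Finset.Icc 1 p, sk + (i:ℝ) * (τ / p) ∈ Set.Icc (0:ℝ) (2 * τ) := by
      intro i hi
      obtain ⟨hi1, hip⟩ := Finset.mem_Icc.mp hi
      have hipR : (i:ℝ) ≤ p := by exact_mod_cast hip
      have h2 : (i:ℝ) * (τ / p) ≤ (p:ℝ) * (τ / p) :=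
        mul_le_mul_of_nonneg_right hipR (by positivity)
      have h3 : (p:ℝ) * (τ / p) = τ := by field_simp
      constructor
      · have hsk0 : (0:ℝ) ≤ sk := hsk.1
        have : (0:ℝ) ≤ (i:ℝ) * (τ / p) := by positivity
        linarith
      · have := hsk.2; linarith
    have hSklb : τ * m ≤ Sk := by
      have hsum_ge : (p:ℝ) * m ≤ ∑ i ∈ Finset.Icc 1 p, ψ (sk + i * (τ / p)) := by
        have hcard : ∑ _i ∈ Finset.Icc 1 p, m = (p:ℝ) * m := by
          rw [Finset.sum_const, Nat.card_Icc, Nat.add_sub_cancel, nsmul_eq_mul]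
        rw [← hcard]
        exact Finset.sum_le_sum fun i hi => hmle _ (hpts i hi)
      have := mul_le_mul_of_nonneg_left hsum_ge (le_of_lt (by positivity : (0:ℝ) < τ / p))
      have hτp : (τ / p) * ((p:ℝ) * m) = τ * m := by field_simp
      rw [hτp] at this
      exact this
    have hSkJ : |Sk - J sk| ≤ (ε / (2 * (τ * C1 + 1))) * τ := hδ1' sk hsk p hp1 hδp1
    have hJsklb : τ * m ≤ J sk := hJlb sk hsk
    -- rewrite the inner sum
    have hAk : ((τ / p) * ∑ i ∈ Finset.Icc 1 p,
        (φ ((k : ℝ) * τ / p + τ) / φ (((i : ℝ) + (k : ℝ)) * τ / p)) ^ 2)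
        = (φ (sk + τ)) ^ 2 * Sk := by
      have heq : ∀ i ∈ Finset.Icc 1 p,
          (φ ((k : ℝ) * τ / p + τ) / φ (((i : ℝ) + (k : ℝ)) * τ / p)) ^ 2
            = (φ (sk + τ)) ^ 2 * ψ (sk + (i:ℝ) * (τ / p)) := by
        intro i _
        have harg : ((i : ℝ) + (k : ℝ)) * τ / p = sk + (i:ℝ) * (τ / p) := by
          rw [hskdef]; field_simp; ring
        rw [harg, div_pow, div_eq_mul_inv]
      rw [Finset.sum_congr rfl heq, ← Finset.mul_sum, hSkdef]
      ring
    rw [hAk]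
    -- inverse difference bound
    set c : ℝ := (φ (sk + τ)) ^ 2 with hcdef
    have hc : 0 < c := hφ2pos _
    have hcinvM : c⁻¹ ≤ M := hMge (sk + τ) ⟨by linarith [hsk.1], by linarith [hsk.2]⟩
    have hSk0 : 0 < Sk := lt_of_lt_of_le (by positivity) hSklb
    have hJsk0 : 0 < J sk := hJpos sk
    have hFsk : F sk = (c * J sk)⁻¹ := by rw [hFdef]
    rw [hFsk]
    have hdiffeq : (c * Sk)⁻¹ - (c * J sk)⁻¹ = c⁻¹ * ((J sk - Sk) / (Sk * J sk)) := by
      field_simp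
    rw [hdiffeq, abs_mul, abs_div, abs_of_pos (inv_pos.mpr hc), abs_of_pos (mul_pos hSk0 hJsk0)]
    have hτm : (0:ℝ) < τ * m := by positivity
    have hdenom : (τ * m) * (τ * m) ≤ Sk * J sk := by nlinarith
    have hnum : |J sk - Sk| ≤ (ε / (2 * (τ * C1 + 1))) * τ := by
      rw [abs_sub_comm]; exact hSkJ
    calc c⁻¹ * (|J sk - Sk| / (Sk * J sk))
        ≤ M * (((ε / (2 * (τ * C1 + 1))) * τ) / ((τ * m) * (τ * m))) := by
          apply mul_le_mul hcinvM _ (by positivity) (le_of_lt hM0)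
          exact div_le_div₀ (by positivity) hnum (by positivity) hdenom
      _ = (ε / (2 * (τ * C1 + 1))) * C1 := by rw [hC1def]; field_simp
  -- outer estimate
  have houter : |(τ / p) * ∑ k ∈ Finset.Icc 1 p, F ((k:ℝ) * τ / p)
      - ∫ s in (0:ℝ)..τ, F s| ≤ (ε / (2 * (τ + 1))) * τ := by
    have h0 : (0:ℝ) ∈ Set.Icc (0:ℝ) τ := ⟨le_refl _, le_of_lt hτ⟩
    have := hδ2' 0 h0 p hp1 hδp2
    simpa [zero_add, mul_div_assoc] using this
  -- combine
  rw [Real.dist_eq]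
  have htri : |(τ / p) * ∑ k ∈ Finset.Icc 1 p,
        ((τ / p) * ∑ i ∈ Finset.Icc 1 p,
            (φ ((k : ℝ) * τ / p + τ) / φ (((i : ℝ) + (k : ℝ)) * τ / p)) ^ 2)⁻¹
      - ∫ s in (0:ℝ)..τ, F s|
      ≤ |(τ / p) * ∑ k ∈ Finset.Icc 1 p,
          ((τ / p) * ∑ i ∈ Finset.Icc 1 p,
              (φ ((k : ℝ) * τ / p + τ) / φ (((i : ℝ) + (k : ℝ)) * τ / p)) ^ 2)⁻¹
        - (τ / p) * ∑ k ∈ Finset.Icc 1 p, F ((k:ℝ) * τ / p)|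
      + |(τ / p) * ∑ k ∈ Finset.Icc 1 p, F ((k:ℝ) * τ / p) - ∫ s in (0:ℝ)..τ, F s| :=
    abs_sub_le _ _ _
  have hfirst : |(τ / p) * ∑ k ∈ Finset.Icc 1 p,
          ((τ / p) * ∑ i ∈ Finset.Icc 1 p,
              (φ ((k : ℝ) * τ / p + τ) / φ (((i : ℝ) + (k : ℝ)) * τ / p)) ^ 2)⁻¹
        - (τ / p) * ∑ k ∈ Finset.Icc 1 p, F ((k:ℝ) * τ / p)|
      ≤ τ * ((ε / (2 * (τ * C1 + 1))) * C1) := by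
    rw [← mul_sub, ← Finset.sum_sub_distrib, abs_mul, abs_of_pos (by positivity : (0:ℝ) < τ / p)]
    calc (τ / p) * |∑ k ∈ Finset.Icc 1 p,
          (((τ / p) * ∑ i ∈ Finset.Icc 1 p,
              (φ ((k : ℝ) * τ / p + τ) / φ (((i : ℝ) + (k : ℝ)) * τ / p)) ^ 2)⁻¹
            - F ((k:ℝ) * τ / p))|
        ≤ (τ / p) * ∑ k ∈ Finset.Icc 1 p,
            |((τ / p) * ∑ i ∈ Finset.Icc 1 p,
                (φ ((k : ℝ) * τ / p + τ) / φ (((i : ℝ) + (k : ℝ)) * τ / p)) ^ 2)⁻¹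
              - F ((k:ℝ) * τ / p)| := by
          apply mul_le_mul_of_nonneg_left (Finset.abs_sum_le_sum_abs _ _) (by positivity)
      _ ≤ (τ / p) * ∑ _k ∈ Finset.Icc 1 p, (ε / (2 * (τ * C1 + 1))) * C1 := by
          apply mul_le_mul_of_nonneg_left (Finset.sum_le_sum hkest) (by positivity)
      _ = τ * ((ε / (2 * (τ * C1 + 1))) * C1) := by
          rw [Finset.sum_const, Nat.card_Icc, Nat.add_sub_cancel, nsmul_eq_mul]
          field_simp
  have hb1 : τ * ((ε / (2 * (τ * C1 + 1))) * C1) < ε / 2 := by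
    rw [div_mul_eq_mul_div, ← mul_div_assoc, div_lt_div_iff₀ (by positivity) two_pos]
    nlinarith
  have hb2 : (ε / (2 * (τ + 1))) * τ < ε / 2 := by
    rw [div_mul_eq_mul_div, div_lt_div_iff₀ (by positivity) two_pos]
    nlinarith
  linarith [htri, hfirst, houter]
end
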